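/- Let α₁ ≥ α₂ ≥ 0 and γ ≥ 0 be integers, and set A = α₁ + 2, B = α₂ + 1, G = γ + 1. Then the number of integers c such that α₂ ≤ γ + c ≤ α₁ and 0 ≤ c ≤ α₂ equals ½(|A − G| − |A − B − G| − |B − G|) − ½(|A + G| − |A − B + G| − |B + G|). -/
import Mathlib

/-- the `n = 3` instance of Theorem 2 of the paper,
`br_α(γ) = K̄(α+ρ₃; γ+ρ₂)`, in explicit form. -/
theorem stmt_18 (α₁ α₂ γ : ℤ) (h1 : α₂ ≤ α₁) (h2 : 0 ≤ α₂) (hγ : 0 ≤ γ) :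
    let A : ℝ := (α₁ : ℝ) + 2
    let B : ℝ := (α₂ : ℝ) + 1
    let G : ℝ := (γ : ℝ) + 1
    (Nat.card {c : ℤ // (α₂ ≤ γ + c ∧ γ + c ≤ α₁) ∧ (0 ≤ c ∧ c ≤ α₂)} : ℝ)
      = 1 / 2 * (|A - G| - |A - B - G| - |B - G|)
        - 1 / 2 * (|A + G| - |A - B + G| - |B + G|) := by
  intro A B G
  have h1' : (α₂ : ℝ) ≤ (α₁ : ℝ) := by exact_mod_cast h1
  have h2' : (0 : ℝ) ≤ (α₂ : ℝ) := by exact_mod_cast h2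
  have hγ' : (0 : ℝ) ≤ (γ : ℝ) := by exact_mod_cast hγ
  have hcard : Nat.card {c : ℤ // (α₂ ≤ γ + c ∧ γ + c ≤ α₁) ∧ (0 ≤ c ∧ c ≤ α₂)}
      = (min α₂ (α₁ - γ) + 1 - max 0 (α₂ - γ)).toNat := by
    have hset : {c : ℤ | (α₂ ≤ γ + c ∧ γ + c ≤ α₁) ∧ (0 ≤ c ∧ c ≤ α₂)}
        = Set.Icc (max 0 (α₂ - γ)) (min α₂ (α₁ - γ)) := by
      ext c
      simp only [Set.mem_setOf_eq, Set.mem_Icc, le_max_iff, max_le_iff, le_min_iff, min_le_iff]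
      omega
    show Nat.card {c : ℤ | (α₂ ≤ γ + c ∧ γ + c ≤ α₁) ∧ (0 ≤ c ∧ c ≤ α₂)} = _
    rw [hset, Nat.card_eq_card_toFinset]
    simp
  rw [hcard]
  rw [abs_of_nonneg (show (0:ℝ) ≤ A + G by simp only [A, G]; linarith),
    abs_of_nonneg (show (0:ℝ) ≤ A - B + G by simp only [A, B, G]; linarith),
    abs_of_nonneg (show (0:ℝ) ≤ B + G by simp only [B, G]; linarith)]
  rcases le_or_gt (α₁ - α₂ - γ) 0 with h3 | h3 <;>
    rcases le_or_gt (α₂ - γ) 0 with h4 | h4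
  · have h3' : (α₁ : ℝ) - (α₂ : ℝ) - (γ : ℝ) ≤ 0 := by exact_mod_cast h3
    have h4' : (α₂ : ℝ) - (γ : ℝ) ≤ 0 := by exact_mod_cast h4
    rw [abs_of_nonpos (show A - B - G ≤ 0 by simp only [A, B, G]; linarith),
      abs_of_nonpos (show B - G ≤ 0 by simp only [B, G]; linarith)]
    rcases le_or_gt (α₁ - γ + 1) 0 with h5 | h5
    · have h5' : (α₁ : ℝ) - (γ : ℝ) + 1 ≤ 0 := by exact_mod_cast h5
      rw [abs_of_nonpos (show A - G ≤ 0 by simp only [A, G]; linarith)]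
      rw [show (min α₂ (α₁ - γ) + 1 - max 0 (α₂ - γ)).toNat = 0 from by omega]
      simp only [A, B, G, Nat.cast_zero]; linarith
    · have h5' : (0 : ℝ) < (α₁ : ℝ) - (γ : ℝ) + 1 := by exact_mod_cast h5
      rw [abs_of_nonneg (show (0:ℝ) ≤ A - G by simp only [A, G]; linarith)]
      rw [show (min α₂ (α₁ - γ) + 1 - max 0 (α₂ - γ)) = α₁ - γ + 1 from by omega,
        ← Int.cast_natCast (R := ℝ), Int.toNat_of_nonneg (show (0:ℤ) ≤ α₁ - γ + 1 by omega)]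
      simp only [A, B, G]; push_cast; linarith
  · have h3' : (α₁ : ℝ) - (α₂ : ℝ) - (γ : ℝ) ≤ 0 := by exact_mod_cast h3
    have h4' : (0 : ℝ) < (α₂ : ℝ) - (γ : ℝ) := by exact_mod_cast h4
    rw [abs_of_nonpos (show A - B - G ≤ 0 by simp only [A, B, G]; linarith),
      abs_of_nonneg (show (0:ℝ) ≤ B - G by simp only [B, G]; linarith),
      abs_of_nonneg (show (0:ℝ) ≤ A - G by simp only [A, G]; linarith)]
    rw [show (min α₂ (α₁ - γ) + 1 - max 0 (α₂ - γ)) = α₁ - α₂ + 1 from by omega,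
      ← Int.cast_natCast (R := ℝ), Int.toNat_of_nonneg (show (0:ℤ) ≤ α₁ - α₂ + 1 by omega)]
    simp only [A, B, G]; push_cast; linarith
  · have h3' : (0 : ℝ) < (α₁ : ℝ) - (α₂ : ℝ) - (γ : ℝ) := by exact_mod_cast h3
    have h4' : (α₂ : ℝ) - (γ : ℝ) ≤ 0 := by exact_mod_cast h4
    rw [abs_of_nonneg (show (0:ℝ) ≤ A - B - G by simp only [A, B, G]; linarith),
      abs_of_nonpos (show B - G ≤ 0 by simp only [B, G]; linarith),
      abs_of_nonneg (show (0:ℝ) ≤ A - G by simp only [A, G]; linarith)]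
    rw [show (min α₂ (α₁ - γ) + 1 - max 0 (α₂ - γ)) = α₂ + 1 from by omega,
      ← Int.cast_natCast (R := ℝ), Int.toNat_of_nonneg (show (0:ℤ) ≤ α₂ + 1 by omega)]
    simp only [A, B, G]; push_cast; linarith
  · have h3' : (0 : ℝ) < (α₁ : ℝ) - (α₂ : ℝ) - (γ : ℝ) := by exact_mod_cast h3
    have h4' : (0 : ℝ) < (α₂ : ℝ) - (γ : ℝ) := by exact_mod_cast h4
    rw [abs_of_nonneg (show (0:ℝ) ≤ A - B - G by simp only [A, B, G]; linarith),
      abs_of_nonneg (show (0:ℝ) ≤ B - G by simp only [B, G]; linarith),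
      abs_of_nonneg (show (0:ℝ) ≤ A - G by simp only [A, G]; linarith)]
    rw [show (min α₂ (α₁ - γ) + 1 - max 0 (α₂ - γ)) = γ + 1 from by omega,
      ← Int.cast_natCast (R := ℝ), Int.toNat_of_nonneg (show (0:ℤ) ≤ γ + 1 by omega)]
    simp only [A, B, G]; push_cast; linarith
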